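/- Let W be a positive semidefinite operator on H_{I1} ⊗ H_{O1} ⊗ H_{I2} ⊗ H_{O2} satisfying W = (1/d_{O2}) (Tr_{O2} W) ⊗ I_{O2}. Let {M_{1,j} ⊗ ρ_{k}} be instrument elements for party 1 and let party 2 measure POVM {M_{2,j'}} and prepare state σ_{k'} with conditional probability Q(k'|j'). Then the joint distribution P(j,k,j',k') = Q(k'|j') P1(k|j) Tr[W (M_{1,j} ⊗ ρ_k ⊗ M_{2,j'} ⊗ σ_{k'})] satisfies P(k'|j',j,k) = Q(k'|j') whenever the conditioning event has positive probability; i.e., the Markov condition (J1,K1) - J2 - K2 holds. -/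

import Mathlib

open Matrix Finset
open scoped ComplexOrder

/-- Four-fold tensor (Kronecker) product of matrices, with right-associated index. -/
noncomputable def tens4 {α β γ δ : Type*} (A : Matrix α α ℂ) (B : Matrix β β ℂ)
    (C : Matrix γ γ ℂ) (D : Matrix δ δ ℂ) :
    Matrix (α × β × γ × δ) (α × β × γ × δ) ℂ :=
  fun x y => A x.1 y.1 * B x.2.1 y.2.1 * C x.2.2.1 y.2.2.1 * D x.2.2.2 y.2.2.2

open Kronecker in
lemma trace_formula_aux {a b c d : ℕ}
    (W : Matrix (Fin a × Fin b × Fin c × Fin d) (Fin a × Fin b × Fin c × Fin d) ℂ)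
    (hWstruct : ∀ (x y : Fin a × Fin b × Fin c) (l l' : Fin d),
      W (x.1, x.2.1, x.2.2, l) (y.1, y.2.1, y.2.2, l')
        = (if l = l' then (1 : ℂ) else 0) *
          ((d : ℂ)⁻¹ * ∑ l'' : Fin d,
            W (x.1, x.2.1, x.2.2, l'') (y.1, y.2.1, y.2.2, l'')))
    (A : Matrix (Fin a) (Fin a) ℂ) (B : Matrix (Fin b) (Fin b) ℂ)
    (C : Matrix (Fin c) (Fin c) ℂ) :
    ∃ G : ℂ, ∀ σ : Matrix (Fin d) (Fin d) ℂ,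
      (W * tens4 A B C σ).trace = G * σ.trace := by
  set V : Matrix (Fin a × Fin b × Fin c) (Fin a × Fin b × Fin c) ℂ :=
    fun p q => ∑ l : Fin d, W (p.1,p.2.1,p.2.2,l) (q.1,q.2.1,q.2.2,l) with hV
  set T3 : Matrix (Fin a × Fin b × Fin c) (Fin a × Fin b × Fin c) ℂ :=
    fun p q => A p.1 q.1 * B p.2.1 q.2.1 * C p.2.2 q.2.2 with hT3
  set E : Matrix (Fin d) (Fin d) ℂ := (d:ℂ)⁻¹ • 1 with hE
  refine ⟨(V * T3).trace * (d:ℂ)⁻¹, fun σ => ?_⟩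
  let e : (Fin a × Fin b × Fin c × Fin d) ≃ ((Fin a × Fin b × Fin c) × Fin d) :=
    ⟨fun x => ((x.1, x.2.1, x.2.2.1), x.2.2.2), fun y => (y.1.1, y.1.2.1, y.1.2.2, y.2),
      fun _ => rfl, fun _ => rfl⟩
  have hWe : W.submatrix e.symm e.symm = V ⊗ₖ E := by
    ext ⟨⟨p1, p2, p3⟩, l⟩ ⟨⟨q1, q2, q3⟩, l'⟩
    have := hWstruct (p1, p2, p3) (q1, q2, q3) l l'
    simp only [submatrix_apply, kroneckerMap_apply, hE, Matrix.smul_apply, smul_eq_mul,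
      Matrix.one_apply, hV] at this ⊢
    show W (p1, p2, p3, l) (q1, q2, q3, l') = _
    rw [this]
    show _ = (∑ x : Fin d, W (p1, p2, p3, x) (q1, q2, q3, x)) * (((d:ℂ)⁻¹ • (1 : Matrix (Fin d) (Fin d) ℂ)) l l')
    rw [Matrix.smul_apply, Matrix.one_apply, smul_eq_mul]; ring
  have hTe : (tens4 A B C σ).submatrix e.symm e.symm = T3 ⊗ₖ σ := by
    ext ⟨⟨p1, p2, p3⟩, l⟩ ⟨⟨q1, q2, q3⟩, l'⟩
    show tens4 A B C σ (p1,p2,p3,l) (q1,q2,q3,l') = _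
    simp only [tens4, kroneckerMap_apply, hT3]
    rfl
  have htr : ((W * tens4 A B C σ).submatrix e.symm e.symm).trace
      = (W * tens4 A B C σ).trace := by
    simp only [Matrix.trace, Matrix.diag, submatrix_apply]
    exact Equiv.sum_comp e.symm (fun i => (W * tens4 A B C σ) i i)
  rw [← htr, ← Matrix.submatrix_mul_equiv W (tens4 A B C σ) ⇑e.symm e.symm ⇑e.symm, hWe, hTe,
    ← Matrix.mul_kronecker_mul, Matrix.trace_kronecker]
  have : (E * σ).trace = (d:ℂ)⁻¹ * σ.trace := by
    rw [hE, Matrix.smul_mul, Matrix.one_mul, Matrix.trace_smul, smul_eq_mul]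
  rw [this]; ring

/-- If a positive semidefinite process matrix `W` satisfies
`W = (1/d_{O2}) (Tr_{O2} W) ⊗ I_{O2}` (stated entrywise), then for party 1's instrument
elements `M₁ⱼ ⊗ ρₖ` and party 2's POVM `{M₂ⱼ'}` with preparations `σₖ'` distributed as
`Q(k'|j')`, the joint distribution
`P(j,k,j',k') = Q(k'|j') P1(k|j) Tr[W (M₁ⱼ ⊗ ρₖ ⊗ M₂ⱼ' ⊗ σₖ')]` satisfies
`P(k'|j',j,k) = Q(k'|j')` whenever the conditioning event has positive probability, and
the Markov condition `(J1,K1) - J2 - K2` holds. -/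

theorem stmt8 {a b c d : ℕ} {J K J' K' : Type*}
    [Fintype J] [Fintype K] [Fintype J'] [Fintype K']
    (W : Matrix (Fin a × Fin b × Fin c × Fin d) (Fin a × Fin b × Fin c × Fin d) ℂ)
    (hW : W.PosSemidef)
    (hWstruct : ∀ (x y : Fin a × Fin b × Fin c) (l l' : Fin d),
      W (x.1, x.2.1, x.2.2, l) (y.1, y.2.1, y.2.2, l')
        = (if l = l' then (1 : ℂ) else 0) *
          ((d : ℂ)⁻¹ * ∑ l'' : Fin d,
            W (x.1, x.2.1, x.2.2, l'') (y.1, y.2.1, y.2.2, l'')))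
    (M1 : J → Matrix (Fin a) (Fin a) ℂ)
    (hM1 : ∀ j, (M1 j).PosSemidef) (hM1sum : ∑ j, M1 j = 1)
    (ρ : K → Matrix (Fin b) (Fin b) ℂ)
    (hρ : ∀ k, (ρ k).PosSemidef) (hρtr : ∀ k, (ρ k).trace = 1)
    (M2 : J' → Matrix (Fin c) (Fin c) ℂ)
    (hM2 : ∀ j', (M2 j').PosSemidef) (hM2sum : ∑ j', M2 j' = 1)
    (σ : K' → Matrix (Fin d) (Fin d) ℂ)
    (hσ : ∀ k', (σ k').PosSemidef) (hσtr : ∀ k', (σ k').trace = 1)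
    (P1 : K → J → ℝ) (hP1 : ∀ k j, 0 ≤ P1 k j) (hP1sum : ∀ j, ∑ k, P1 k j = 1)
    (Q : K' → J' → ℝ) (hQ : ∀ k' j', 0 ≤ Q k' j') (hQsum : ∀ j', ∑ k', Q k' j' = 1)
    (P : J → K → J' → K' → ℝ)
    (hP : ∀ j k j' k', P j k j' k'
      = Q k' j' * P1 k j * ((W * tens4 (M1 j) (ρ k) (M2 j') (σ k')).trace).re) :
    (∀ (j : J) (k : K) (j' : J') (k' : K'),
      0 < ∑ k'' : K', P j k j' k'' →
      P j k j' k' / (∑ k'' : K', P j k j' k'') = Q k' j') ∧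
    (∀ (j : J) (k : K) (j' : J') (k' : K'),
      P j k j' k' * (∑ j'' : J, ∑ k'' : K, ∑ k2 : K', P j'' k'' j' k2)
        = (∑ k2 : K', P j k j' k2)
          * (∑ j'' : J, ∑ k'' : K, P j'' k'' j' k')) := by

  choose G hG using fun (j : J) (k : K) (j' : J') =>
    trace_formula_aux W hWstruct (M1 j) (ρ k) (M2 j')
  have hPt : ∀ j k j' k', P j k j' k' = Q k' j' * (P1 k j * (G j k j').re) := by
    intro j k j' k'
    rw [hP, hG j k j' (σ k'), hσtr, mul_one]; ring
  have hsum : ∀ j k j', ∑ k'' : K', P j k j' k'' = P1 k j * (G j k j').re := by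
    intro j k j'
    simp only [hPt]
    rw [← Finset.sum_mul, hQsum]; ring
  constructor
  · intro j k j' k' hpos
    rw [hsum] at hpos ⊢
    rw [hPt, mul_div_assoc, div_self (ne_of_gt hpos), mul_one]
  · intro j k j' k'
    have h1 : ∑ j'' : J, ∑ k'' : K, ∑ k2 : K', P j'' k'' j' k2
        = ∑ j'' : J, ∑ k'' : K, P1 k'' j'' * (G j'' k'' j').re :=
      Finset.sum_congr rfl fun j'' _ => Finset.sum_congr rfl fun k'' _ => hsum _ _ _
    have h2 : ∑ j'' : J, ∑ k'' : K, P j'' k'' j' k'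
        = Q k' j' * ∑ j'' : J, ∑ k'' : K, P1 k'' j'' * (G j'' k'' j').re := by
      simp only [hPt, ← Finset.mul_sum]
    rw [h1, hsum j k j', hPt j k j' k', h2]
    ring
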